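/- For all positive integers s and t with t > s, the functions F_1 and F_2 satisfy 3·s·t·K(s,t) < 2·F_1(s,t), F_1(s,t) < F_2(s,t), and F_2(s,t) < 158·s·t·K(s,t); equivalently, 3s/2 < F_1(s,t)/(t·K(s,t)) < F_2(s,t)/(t·K(s,t)) < 158s. -/

import Mathlib

/-- The pair `(K(s,t), K'(s,t))` of auxiliary functions, defined for positive integers `s, t`:
`K(1,t) = 2`, `K'(1,t) = 5`; `K(s,1) = 2^s`, `K'(s,1) = 2^s + 3`; and for `s, t > 1`,
`K(s,t) = K(s,t-1) * K(s-1, K'(s,t-1))` and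
`K'(s,t) = K'(s,t-1) * K(s-1, K'(s,t-1)) + K'(s-1, K'(s,t-1))`.
(The value at arguments equal to `0` is junk.) -/
def KK : ℕ → ℕ → ℕ × ℕ
  | 0, _ => (0, 0)
  | 1, _ => (2, 5)
  | _+2, 0 => (0, 0)
  | s+2, 1 => (2^(s+2), 2^(s+2) + 3)
  | s+2, t+2 =>
    let p := KK (s+2) (t+1)
    let q := KK (s+1) p.2
    (p.1 * q.1, p.2 * q.1 + q.2)
termination_by s t => (s, t)

/-- The function `K(s,t)`. -/
def K (s t : ℕ) : ℕ := (KK s t).1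

/-- The function `K'(s,t)`. -/
def K' (s t : ℕ) : ℕ := (KK s t).2

/-- The function `R(s,t)` (root triangles minus teeth of `X(s,t)`), defined for positive
integers `s, t`: `R(1,t) = 0`, `R(s,1) = 0`, and
`R(s,t) = 2 * K(s-1, K'(s,t-1)) + R(s-1, K'(s,t-1))` for `s, t > 1`.
(The value at arguments equal to `0` is junk.) -/
def R : ℕ → ℕ → ℕ
  | 0, _ => 0
  | 1, _ => 0
  | _+2, 0 => 0
  | _+2, 1 => 0
  | s+2, t+2 => 2 * K (s+1) (K' (s+2) (t+1)) + R (s+1) (K' (s+2) (t+1))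
termination_by s t => (s, t)

/-- The face number `F_0(s,t)` of the sphere `S(s,t)`:
`F_0(1,t) = 2t + 7` for `t > 1`, `F_0(s,1) = 2^(s+1) + 5`, and for `s, t > 1`,
`F_0(s,t) = K(s-1,K'(s,t-1)) * (F_0(s,t-1) + R(s,t-1) - 2) + F_0(s-1,K'(s,t-1))`.
(The value at arguments equal to `0` is junk; the subtraction never truncates.) -/
def F0 : ℕ → ℕ → ℕ
  | 0, _ => 0
  | _+1, 0 => 0
  | s+1, 1 => 2^(s+2) + 5
  | 1, t+2 => 2*(t+2) + 7
  | s+2, t+2 =>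
      K (s+1) (K' (s+2) (t+1)) * (F0 (s+2) (t+1) + R (s+2) (t+1) - 2)
        + F0 (s+1) (K' (s+2) (t+1))
termination_by s t => (s, t)

/-- The face number `F_1(s,t)` of the sphere `S(s,t)`:
`F_1(1,t) = 10t + 15` for `t > 1`, `F_1(s,1) = 3 * 2^(s+1) + 9`, and for `s, t > 1`,
`F_1(s,t) = K(s-1,K'(s,t-1)) * (F_1(s,t-1) + 3K'(s,t-1) + 3R(s,t-1) - 4) + F_1(s-1,K'(s,t-1))`.
(The value at arguments equal to `0` is junk; the subtraction never truncates.) -/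
def F1 : ℕ → ℕ → ℕ
  | 0, _ => 0
  | _+1, 0 => 0
  | s+1, 1 => 3 * 2^(s+2) + 9
  | 1, t+2 => 10*(t+2) + 15
  | s+2, t+2 =>
      K (s+1) (K' (s+2) (t+1))
          * (F1 (s+2) (t+1) + 3 * K' (s+2) (t+1) + 3 * R (s+2) (t+1) - 4)
        + F1 (s+1) (K' (s+2) (t+1))
termination_by s t => (s, t)

/-- The face number `F_2(s,t)` of the sphere `S(s,t)`:
`F_2(1,t) = 16t + 12` for `t > 1`, `F_2(s,1) = 2^(s+3) + 8`, and for `s, t > 1`,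
`F_2(s,t) = K(s-1,K'(s,t-1)) * (F_2(s,t-1) + 3K'(s,t-1) + 4R(s,t-1) + 1) + F_2(s-1,K'(s,t-1))`.
(The value at arguments equal to `0` is junk.) -/
def F2 : ℕ → ℕ → ℕ
  | 0, _ => 0
  | _+1, 0 => 0
  | s+1, 1 => 2^(s+4) + 8
  | 1, t+2 => 16*(t+2) + 12
  | s+2, t+2 =>
      K (s+1) (K' (s+2) (t+1))
          * (F2 (s+2) (t+1) + 3 * K' (s+2) (t+1) + 4 * R (s+2) (t+1) + 1)
        + F2 (s+1) (K' (s+2) (t+1))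
termination_by s t => (s, t)

/-- The face number `F_3(s,t)` of the sphere `S(s,t)`:
`F_3(1,t) = 8t + 4` for `t > 1`, `F_3(s,1) = 2^(s+2) + 4`, and for `s, t > 1`,
`F_3(s,t) = K(s-1,K'(s,t-1)) * (F_3(s,t-1) + 2R(s,t-1) + 3) + F_3(s-1,K'(s,t-1))`.
(The value at arguments equal to `0` is junk.) -/
def F3 : ℕ → ℕ → ℕ
  | 0, _ => 0
  | _+1, 0 => 0
  | s+1, 1 => 2^(s+3) + 4
  | 1, t+2 => 8*(t+2) + 4
  | s+2, t+2 =>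
      K (s+1) (K' (s+2) (t+1)) * (F3 (s+2) (t+1) + 2 * R (s+2) (t+1) + 3)
        + F3 (s+1) (K' (s+2) (t+1))
termination_by s t => (s, t)

-- equation lemmas, flexible versions
lemma K_one (t : ℕ) : K 1 t = 2 := by simp [K, KK]
lemma K'_one (t : ℕ) : K' 1 t = 5 := by simp [K', KK]
lemma K_t1 (s : ℕ) (hs : 1 ≤ s) : K s 1 = 2^s := by
  obtain ⟨s, rfl⟩ : ∃ s', s = s' + 1 := ⟨s - 1, by omega⟩
  rcases s with _ | s
  · simp [K, KK]
  · show K (s+2) 1 = 2^(s+2); simp [K, KK]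
lemma K'_t1 (s : ℕ) (hs : 1 ≤ s) : K' s 1 = 2^s + 3 := by
  obtain ⟨s, rfl⟩ : ∃ s', s = s' + 1 := ⟨s - 1, by omega⟩
  rcases s with _ | s
  · simp [K', KK]
  · show K' (s+2) 1 = 2^(s+2) + 3; simp [K', KK]
lemma K_step (s t : ℕ) (hs : 2 ≤ s) (ht : 2 ≤ t) :
    K s t = K s (t-1) * K (s-1) (K' s (t-1)) := by
  obtain ⟨s, rfl⟩ : ∃ s', s = s' + 2 := ⟨s - 2, by omega⟩
  obtain ⟨t, rfl⟩ : ∃ t', t = t' + 2 := ⟨t - 2, by omega⟩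
  show K (s+2) (t+2) = K (s+2) (t+1) * K (s+1) (K' (s+2) (t+1))
  rw [K, KK]; rfl
lemma K'_step (s t : ℕ) (hs : 2 ≤ s) (ht : 2 ≤ t) :
    K' s t = K' s (t-1) * K (s-1) (K' s (t-1)) + K' (s-1) (K' s (t-1)) := by
  obtain ⟨s, rfl⟩ : ∃ s', s = s' + 2 := ⟨s - 2, by omega⟩
  obtain ⟨t, rfl⟩ : ∃ t', t = t' + 2 := ⟨t - 2, by omega⟩
  show K' (s+2) (t+2) = K' (s+2) (t+1) * K (s+1) (K' (s+2) (t+1)) + K' (s+1) (K' (s+2) (t+1))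
  rw [K', KK]; rfl
lemma R_one (t : ℕ) : R 1 t = 0 := by rw [R]
lemma R_t1 (s : ℕ) : R s 1 = 0 := by
  rcases s with _ | _ | s <;> rw [R]
lemma R_step (s t : ℕ) (hs : 2 ≤ s) (ht : 2 ≤ t) :
    R s t = 2 * K (s-1) (K' s (t-1)) + R (s-1) (K' s (t-1)) := by
  obtain ⟨s, rfl⟩ : ∃ s', s = s' + 2 := ⟨s - 2, by omega⟩
  obtain ⟨t, rfl⟩ : ∃ t', t = t' + 2 := ⟨t - 2, by omega⟩
  show R (s+2) (t+2) = _
  rw [R]; norm_num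
lemma F1_t1 (s : ℕ) (hs : 1 ≤ s) : F1 s 1 = 3 * 2^(s+1) + 9 := by
  obtain ⟨s, rfl⟩ : ∃ s', s = s' + 1 := ⟨s - 1, by omega⟩
  rw [F1]; try norm_num
lemma F1_one (t : ℕ) (ht : 2 ≤ t) : F1 1 t = 10*t + 15 := by
  obtain ⟨t, rfl⟩ : ∃ t', t = t' + 2 := ⟨t - 2, by omega⟩
  rw [F1]; try norm_num
lemma F1_step (s t : ℕ) (hs : 2 ≤ s) (ht : 2 ≤ t) :
    F1 s t = K (s-1) (K' s (t-1)) * (F1 s (t-1) + 3 * K' s (t-1) + 3 * R s (t-1) - 4)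
      + F1 (s-1) (K' s (t-1)) := by
  obtain ⟨s, rfl⟩ : ∃ s', s = s' + 2 := ⟨s - 2, by omega⟩
  obtain ⟨t, rfl⟩ : ∃ t', t = t' + 2 := ⟨t - 2, by omega⟩
  show F1 (s+2) (t+2) = _
  rw [F1]; try norm_num
lemma F2_t1 (s : ℕ) (hs : 1 ≤ s) : F2 s 1 = 2^(s+3) + 8 := by
  obtain ⟨s, rfl⟩ : ∃ s', s = s' + 1 := ⟨s - 1, by omega⟩
  rw [F2]; try norm_num
lemma F2_one (t : ℕ) (ht : 2 ≤ t) : F2 1 t = 16*t + 12 := by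
  obtain ⟨t, rfl⟩ : ∃ t', t = t' + 2 := ⟨t - 2, by omega⟩
  rw [F2]; try norm_num
lemma F2_step (s t : ℕ) (hs : 2 ≤ s) (ht : 2 ≤ t) :
    F2 s t = K (s-1) (K' s (t-1)) * (F2 s (t-1) + 3 * K' s (t-1) + 4 * R s (t-1) + 1)
      + F2 (s-1) (K' s (t-1)) := by
  obtain ⟨s, rfl⟩ : ∃ s', s = s' + 2 := ⟨s - 2, by omega⟩
  obtain ⟨t, rfl⟩ : ∃ t', t = t' + 2 := ⟨t - 2, by omega⟩
  show F2 (s+2) (t+2) = _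
  rw [F2]; try norm_num

/-- Basic bounds: `2^s ≤ K s t` and `K s t + 3 ≤ K' s t`. -/
lemma base_KK : ∀ s, 1 ≤ s → ∀ t, 1 ≤ t → 2^s ≤ K s t ∧ K s t + 3 ≤ K' s t := by
  intro s
  induction s using Nat.strong_induction_on with
  | _ s ihs =>
    intro hs t
    induction t using Nat.strong_induction_on with
    | _ t iht =>
      intro ht
      rcases eq_or_lt_of_le hs with h1 | hs2
      · rw [← h1, K_one, K'_one]; norm_num
      rcases eq_or_lt_of_le ht with h2 | ht2
      · rw [← h2, K_t1 s (by omega), K'_t1 s (by omega)]; omega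
      have hrec := iht (t-1) (by omega) (by omega)
      set Kv := K s (t-1) with hKv
      set Kp := K' s (t-1) with hKp
      have hKp1 : 1 ≤ Kp := by omega
      have houter := ihs (s-1) (by omega) (by omega) Kp hKp1
      set m := K (s-1) Kp with hm
      have hm1 : 1 ≤ m := le_trans (Nat.one_le_two_pow) houter.1
      rw [K_step s t (by omega) (by omega), K'_step s t (by omega) (by omega), ← hKv, ← hKp, ← hm]
      have hpow : 2^s ≤ Kv := hrec.1
      constructor
      · calc 2^s ≤ Kv := hpow
          _ = Kv * 1 := (mul_one _).symm
          _ ≤ Kv * m := Nat.mul_le_mul_left _ hm1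
      · have h3 : (Kv + 3) * m ≤ Kp * m := Nat.mul_le_mul_right _ (by omega)
        nlinarith [houter.2, hm1]

/-- `2^s * (K' s t + 8) ≤ (2^s + 11) * K s t` for `s ≥ 2`. -/
lemma K'_upper : ∀ s, 2 ≤ s → ∀ t, 1 ≤ t → 2^s * (K' s t + 8) ≤ (2^s + 11) * K s t := by
  intro s
  induction s using Nat.strong_induction_on with
  | _ s ihs =>
    intro hs t
    induction t using Nat.strong_induction_on with
    | _ t iht =>
      intro ht
      rcases eq_or_lt_of_le ht with h2 | ht2
      · rw [← h2, K_t1 s (by omega), K'_t1 s (by omega)]; ring_nf; exact le_rfl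
      have hrec := iht (t-1) (by omega) (by omega)
      have hbase := base_KK s (by omega) (t-1) (by omega)
      set Kv := K s (t-1) with hKv
      set Kp := K' s (t-1) with hKp
      have hKp1 : 1 ≤ Kp := by omega
      rw [K_step s t (by omega) (by omega), K'_step s t (by omega) (by omega), ← hKv, ← hKp]
      set m := K (s-1) Kp with hm
      rcases eq_or_lt_of_le hs with h3 | hs3
      · -- s = 2
        have e1 : m = 2 := by rw [hm, ← h3]; exact K_one Kp
        have e2 : K' (s-1) Kp = 5 := by rw [← h3]; exact K'_one Kp
        have e3 : (2:ℕ)^s = 4 := by rw [← h3]; norm_num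
        rw [e3] at hrec
        rw [e1, e2, e3]
        omega
      · -- s ≥ 3
        have houter := ihs (s-1) (by omega) (by omega) Kp hKp1
        rw [← hm] at houter
        have hbm := base_KK (s-1) (by omega) Kp hKp1
        rw [← hm] at hbm
        have hm1 : 1 ≤ m := le_trans Nat.one_le_two_pow hbm.1
        have hQ : 4 ≤ 2^(s-1) := by
          calc (4:ℕ) = 2^2 := by norm_num
            _ ≤ 2^(s-1) := Nat.pow_le_pow_right (by norm_num) (by omega)
        have hP : 2^s = 2 * 2^(s-1) := by
          rw [← pow_succ']
          congr 1
          omega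
        have h1m : (2^s * (Kp + 8)) * m ≤ ((2^s + 11) * Kv) * m := Nat.mul_le_mul_right _ hrec
        have h2d : 2 * (2^(s-1) * (K' (s-1) Kp + 8)) ≤ 2 * ((2^(s-1) + 11) * m) :=
          Nat.mul_le_mul_left _ houter
        have h3m : (2 * 2^(s-1) + 22) * m ≤ (16 * 2^(s-1)) * m :=
          Nat.mul_le_mul_right _ (by omega)
        nlinarith [h1m, h2d, h3m, hP]

/-- `R s t ≤ K s t`. -/
lemma R_le_K : ∀ s, 1 ≤ s → ∀ t, 1 ≤ t → R s t ≤ K s t := by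
  intro s
  induction s using Nat.strong_induction_on with
  | _ s ihs =>
    intro hs t
    induction t using Nat.strong_induction_on with
    | _ t iht =>
      intro ht
      rcases eq_or_lt_of_le hs with h1 | hs2
      · rw [← h1, R_one]; exact Nat.zero_le _
      rcases eq_or_lt_of_le ht with h2 | ht2
      · rw [← h2, R_t1]; exact Nat.zero_le _
      have hbase := base_KK s (by omega) (t-1) (by omega)
      set Kv := K s (t-1) with hKv
      set Kp := K' s (t-1) with hKp
      have hKp1 : 1 ≤ Kp := by omega
      have houter := ihs (s-1) (by omega) (by omega) Kp hKp1
      rw [R_step s t (by omega) (by omega), K_step s t (by omega) (by omega), ← hKv, ← hKp]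
      set m := K (s-1) Kp with hm
      have hKv4 : 4 ≤ Kv := by
        have : (4:ℕ) = 2^2 := by norm_num
        have h := hbase.1
        have : (2:ℕ)^2 ≤ 2^s := Nat.pow_le_pow_right (by norm_num) (by omega)
        omega
      calc 2 * m + R (s-1) Kp ≤ 2 * m + m := by omega
        _ = 3 * m := by ring
        _ ≤ Kv * m := Nat.mul_le_mul_right _ (by omega)

/-- Auxiliary coefficient sequence for the upper bound on `F2`. -/
def Useq : ℕ → ℕ
  | 0 => 8
  | 1 => 8
  | s+2 => ((Useq (s+1) + 3) * (2^(s+2) + 11) + 2^(s+4)) / 2^(s+2) + 1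

lemma U_prop (s : ℕ) :
    (Useq (s+1) + 3) * (2^(s+2) + 11) + 2^(s+4) ≤ 2^(s+2) * Useq (s+2) := by
  rw [show Useq (s+2) = ((Useq (s+1) + 3) * (2^(s+2) + 11) + 2^(s+4)) / 2^(s+2) + 1 from rfl]
  set N := (Useq (s+1) + 3) * (2^(s+2) + 11) + 2^(s+4) with hN
  set d := (2:ℕ)^(s+2) with hd
  have hd0 : 0 < d := Nat.pow_pos (by norm_num)
  have := Nat.div_add_mod N d
  have := Nat.mod_lt N hd0
  calc N ≤ d * (N / d) + d := by omega
    _ = d * (N / d + 1) := by ring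

lemma U_ge8 : ∀ s, 8 ≤ Useq s := by
  intro s
  induction s using Nat.strong_induction_on with
  | _ s ih =>
    match s with
    | 0 => norm_num [Useq]
    | 1 => norm_num [Useq]
    | s+2 =>
      have h := U_prop s
      have h8 := ih (s+1) (by omega)
      have hd : (4:ℕ) ≤ 2^(s+2) := by
        calc (4:ℕ) = 2^2 := by norm_num
          _ ≤ 2^(s+2) := Nat.pow_le_pow_right (by norm_num) (by omega)
      have step1 : 2^(s+2) * 8 ≤ 11 * (2^(s+2) + 11) := by omega
      have step2 : 11 * (2^(s+2) + 11) ≤ (Useq (s+1) + 3) * (2^(s+2) + 11) :=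
        Nat.mul_le_mul_right _ (by omega)
      have : 2^(s+2) * 8 ≤ 2^(s+2) * Useq (s+2) :=
        le_trans (le_trans step1 step2) (le_trans (Nat.le_add_right _ _) h)
      exact Nat.le_of_mul_le_mul_left this (Nat.pow_pos (by norm_num))

lemma pow_aux : ∀ L, 6 ≤ L → 1100 * L < 93 * 2^L + 1067 := by
  intro L hL
  induction L, hL using Nat.le_induction with
  | base => norm_num
  | succ L hL ih =>
    have h64 : (64:ℕ) ≤ 2^L := by
      calc (64:ℕ) = 2^6 := by norm_num
        _ ≤ 2^L := Nat.pow_le_pow_right (by norm_num) hL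
    have : (2:ℕ)^(L+1) = 2 * 2^L := by ring
    omega

lemma U_le : ∀ s, Useq (s+1) ≤ 100 * (s+1) := by
  intro s
  induction s using Nat.strong_induction_on with
  | _ s ih =>
    match s with
    | 0 => norm_num [Useq]
    | 1 => norm_num [Useq]
    | 2 => norm_num [Useq]
    | 3 => norm_num [Useq]
    | 4 => norm_num [Useq]
    | (n+5) =>
      have ihp : Useq (n+5) ≤ 100 * (n+5) := ih (n+4) (by omega)
      have hL := pow_aux (n+6) (by omega)
      show Useq (n+6) ≤ 100 * (n+6)
      rw [show Useq (n+6) = ((Useq (n+5) + 3) * (2^(n+6) + 11) + 2^(n+8)) / 2^(n+6) + 1 from rfl]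
      have hd0 : 0 < (2:ℕ)^(n+6) := Nat.pow_pos (by norm_num)
      have hlt : (Useq (n+5) + 3) * (2^(n+6) + 11) + 2^(n+8) < (100 * (n+6)) * 2^(n+6) := by
        have e : (2:ℕ)^(n+8) = 4 * 2^(n+6) := by ring
        nlinarith [ihp, hL, e, hd0]
      have := (Nat.div_lt_iff_lt_mul hd0).2 hlt
      omega

/-- Lower bound for `F1`. -/
lemma F1_lower : ∀ s, 1 ≤ s → ∀ t, 1 ≤ t → ((3*s+3)*(t-1) + 12) * K s t ≤ 2 * F1 s t := by
  intro s
  induction s using Nat.strong_induction_on with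
  | _ s ihs =>
    intro hs t
    induction t using Nat.strong_induction_on with
    | _ t iht =>
      intro ht
      rcases eq_or_lt_of_le hs with h1 | hs2
      · -- s = 1
        rw [← h1, K_one]
        rcases eq_or_lt_of_le ht with h2 | ht2
        · rw [← h2, F1_t1 1 (by omega)]; norm_num
        · rw [F1_one t (by omega)]; omega
      rcases eq_or_lt_of_le ht with h2 | ht2
      · -- t = 1
        rw [← h2, K_t1 s (by omega), F1_t1 s (by omega)]
        have e : (2:ℕ)^(s+1) = 2 * 2^s := by ring
        omega
      -- step case
      obtain ⟨s', rfl⟩ : ∃ s', s = s' + 2 := ⟨s - 2, by omega⟩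
      obtain ⟨t', rfl⟩ : ∃ t', t = t' + 2 := ⟨t - 2, by omega⟩
      have eq1 : F1 (s'+2) (t'+2) = K (s'+1) (K' (s'+2) (t'+1)) *
          (F1 (s'+2) (t'+1) + 3 * K' (s'+2) (t'+1) + 3 * R (s'+2) (t'+1) - 4)
          + F1 (s'+1) (K' (s'+2) (t'+1)) := F1_step (s'+2) (t'+2) (by omega) (by omega)
      have eqK : K (s'+2) (t'+2) = K (s'+2) (t'+1) * K (s'+1) (K' (s'+2) (t'+1)) :=
        K_step (s'+2) (t'+2) (by omega) (by omega)
      have hbase := base_KK (s'+2) (by omega) (t'+1) (by omega)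
      have hp4 : (4:ℕ) ≤ 2^(s'+2) := by
        calc (4:ℕ) = 2^2 := by norm_num
          _ ≤ 2^(s'+2) := Nat.pow_le_pow_right (by norm_num) (by omega)
      obtain ⟨d, hd⟩ : ∃ d, K' (s'+2) (t'+1) = d + 1 := ⟨K' (s'+2) (t'+1) - 1, by omega⟩
      rw [hd] at eq1 eqK hbase
      have hF : ((3*(s'+2)+3) * t' + 12) * K (s'+2) (t'+1) ≤ 2 * F1 (s'+2) (t'+1) :=
        iht (t'+1) (by omega) (by omega)
      have hG : ((3*(s'+1)+3) * d + 12) * K (s'+1) (d+1) ≤ 2 * F1 (s'+1) (d+1) :=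
        ihs (s'+1) (by omega) (by omega) (d+1) (by omega)
      have hbm := base_KK (s'+1) (by omega) (d+1) (by omega)
      set Kv := K (s'+2) (t'+1) with hKv
      set m := K (s'+1) (d+1) with hm
      set F := F1 (s'+2) (t'+1) with hFd
      set G := F1 (s'+1) (d+1) with hGd
      set Rv := R (s'+2) (t'+1) with hRv
      have hm2 : 2 ≤ m := by
        have := hbm.1
        have h2 : (2:ℕ) ≤ 2^(s'+1) := by
          calc (2:ℕ) = 2^1 := by norm_num
            _ ≤ 2^(s'+1) := Nat.pow_le_pow_right (by norm_num) (by omega)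
        omega
      have hsub : 4 ≤ F + 3*(d+1) + 3*Rv := by omega
      obtain ⟨X, hX⟩ : ∃ X, F + 3*(d+1) + 3*Rv = X + 4 := ⟨F + 3*(d+1) + 3*Rv - 4, by omega⟩
      rw [show F + 3*(d+1) + 3*Rv - 4 = X by omega] at eq1
      show ((3*(s'+2)+3) * (t'+1) + 12) * K (s'+2) (t'+2) ≤ 2 * F1 (s'+2) (t'+2)
      rw [eqK, eq1]
      have hFm := Nat.mul_le_mul_right m hF
      have hd2 : Kv + 2 ≤ d := by omega
      have key : ((3*s'+12)*(Kv+2))*m ≤ ((3*s'+12)*d)*m :=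
        Nat.mul_le_mul_right _ (Nat.mul_le_mul_left _ hd2)
      nlinarith [hFm, hG, key, hX, hm2]

/-- `F1 + K ≤ F2`. -/
lemma F1_add_K_le_F2 : ∀ s, 1 ≤ s → ∀ t, 1 ≤ t → F1 s t + K s t ≤ F2 s t := by
  intro s
  induction s using Nat.strong_induction_on with
  | _ s ihs =>
    intro hs t
    induction t using Nat.strong_induction_on with
    | _ t iht =>
      intro ht
      rcases eq_or_lt_of_le hs with h1 | hs2
      · rw [← h1, K_one]
        rcases eq_or_lt_of_le ht with h2 | ht2
        · rw [← h2, F1_t1 1 (by omega), F2_t1 1 (by omega)]; norm_num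
        · rw [F1_one t (by omega), F2_one t (by omega)]; omega
      rcases eq_or_lt_of_le ht with h2 | ht2
      · rw [← h2, K_t1 s (by omega), F1_t1 s (by omega), F2_t1 s (by omega)]
        have e1 : (2:ℕ)^(s+1) = 2 * 2^s := by ring
        have e3 : (2:ℕ)^(s+3) = 8 * 2^s := by ring
        have : (1:ℕ) ≤ 2^s := Nat.one_le_two_pow
        omega
      obtain ⟨s', rfl⟩ : ∃ s', s = s' + 2 := ⟨s - 2, by omega⟩
      obtain ⟨t', rfl⟩ : ∃ t', t = t' + 2 := ⟨t - 2, by omega⟩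
      have eq1 : F1 (s'+2) (t'+2) = K (s'+1) (K' (s'+2) (t'+1)) *
          (F1 (s'+2) (t'+1) + 3 * K' (s'+2) (t'+1) + 3 * R (s'+2) (t'+1) - 4)
          + F1 (s'+1) (K' (s'+2) (t'+1)) := F1_step (s'+2) (t'+2) (by omega) (by omega)
      have eq2 : F2 (s'+2) (t'+2) = K (s'+1) (K' (s'+2) (t'+1)) *
          (F2 (s'+2) (t'+1) + 3 * K' (s'+2) (t'+1) + 4 * R (s'+2) (t'+1) + 1)
          + F2 (s'+1) (K' (s'+2) (t'+1)) := F2_step (s'+2) (t'+2) (by omega) (by omega)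
      have eqK : K (s'+2) (t'+2) = K (s'+2) (t'+1) * K (s'+1) (K' (s'+2) (t'+1)) :=
        K_step (s'+2) (t'+2) (by omega) (by omega)
      have hbase := base_KK (s'+2) (by omega) (t'+1) (by omega)
      have hp4 : (4:ℕ) ≤ 2^(s'+2) := by
        calc (4:ℕ) = 2^2 := by norm_num
          _ ≤ 2^(s'+2) := Nat.pow_le_pow_right (by norm_num) (by omega)
      obtain ⟨d, hd⟩ : ∃ d, K' (s'+2) (t'+1) = d + 1 := ⟨K' (s'+2) (t'+1) - 1, by omega⟩
      rw [hd] at eq1 eq2 eqK hbase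
      have hF : F1 (s'+2) (t'+1) + K (s'+2) (t'+1) ≤ F2 (s'+2) (t'+1) :=
        iht (t'+1) (by omega) (by omega)
      have hG : F1 (s'+1) (d+1) + K (s'+1) (d+1) ≤ F2 (s'+1) (d+1) :=
        ihs (s'+1) (by omega) (by omega) (d+1) (by omega)
      set Kv := K (s'+2) (t'+1) with hKv
      set m := K (s'+1) (d+1) with hm
      set Rv := R (s'+2) (t'+1) with hRv
      have hsub : 4 ≤ F1 (s'+2) (t'+1) + 3*(d+1) + 3*Rv := by omega
      obtain ⟨X, hX⟩ : ∃ X, F1 (s'+2) (t'+1) + 3*(d+1) + 3*Rv = X + 4 :=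
        ⟨F1 (s'+2) (t'+1) + 3*(d+1) + 3*Rv - 4, by omega⟩
      rw [show F1 (s'+2) (t'+1) + 3*(d+1) + 3*Rv - 4 = X by omega] at eq1
      rw [eq1, eq2, eqK]
      have hFm := Nat.mul_le_mul_left m hF
      nlinarith [hFm, hG, hX]

/-- Upper bound for `F2`. -/
lemma F2_upper : ∀ s, 1 ≤ s → ∀ t, 1 ≤ t → F2 s t ≤ (Useq s * t + 6) * K s t := by
  intro s
  induction s using Nat.strong_induction_on with
  | _ s ihs =>
    intro hs t
    induction t using Nat.strong_induction_on with
    | _ t iht =>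
      intro ht
      rcases eq_or_lt_of_le hs with h1 | hs2
      · rw [← h1, K_one]
        have hU : Useq 1 = 8 := rfl
        rw [hU]
        rcases eq_or_lt_of_le ht with h2 | ht2
        · rw [← h2, F2_t1 1 (by omega)]; norm_num
        · rw [F2_one t (by omega)]; omega
      rcases eq_or_lt_of_le ht with h2 | ht2
      · rw [← h2, K_t1 s (by omega), F2_t1 s (by omega)]
        have e3 : (2:ℕ)^(s+3) = 8 * 2^s := by ring
        have hp4 : (4:ℕ) ≤ 2^s := by
          calc (4:ℕ) = 2^2 := by norm_num
            _ ≤ 2^s := Nat.pow_le_pow_right (by norm_num) (by omega)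
        have hU8 : 8 ≤ Useq s := U_ge8 s
        have h1 : 8 * 2^s ≤ Useq s * 2^s := Nat.mul_le_mul_right _ hU8
        nlinarith [h1, hp4]
      obtain ⟨s', rfl⟩ : ∃ s', s = s' + 2 := ⟨s - 2, by omega⟩
      obtain ⟨t', rfl⟩ : ∃ t', t = t' + 2 := ⟨t - 2, by omega⟩
      have eq2 : F2 (s'+2) (t'+2) = K (s'+1) (K' (s'+2) (t'+1)) *
          (F2 (s'+2) (t'+1) + 3 * K' (s'+2) (t'+1) + 4 * R (s'+2) (t'+1) + 1)
          + F2 (s'+1) (K' (s'+2) (t'+1)) := F2_step (s'+2) (t'+2) (by omega) (by omega)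
      have eqK : K (s'+2) (t'+2) = K (s'+2) (t'+1) * K (s'+1) (K' (s'+2) (t'+1)) :=
        K_step (s'+2) (t'+2) (by omega) (by omega)
      have hbase := base_KK (s'+2) (by omega) (t'+1) (by omega)
      have hL3 : 2^(s'+2) * (K' (s'+2) (t'+1) + 8) ≤ (2^(s'+2) + 11) * K (s'+2) (t'+1) :=
        K'_upper (s'+2) (by omega) (t'+1) (by omega)
      have hR : R (s'+2) (t'+1) ≤ K (s'+2) (t'+1) :=
        R_le_K (s'+2) (by omega) (t'+1) (by omega)
      have hp4 : (4:ℕ) ≤ 2^(s'+2) := by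
        calc (4:ℕ) = 2^2 := by norm_num
          _ ≤ 2^(s'+2) := Nat.pow_le_pow_right (by norm_num) (by omega)
      obtain ⟨d, hd⟩ : ∃ d, K' (s'+2) (t'+1) = d + 1 := ⟨K' (s'+2) (t'+1) - 1, by omega⟩
      rw [hd] at eq2 eqK hbase hL3
      have hF : F2 (s'+2) (t'+1) ≤ (Useq (s'+2) * (t'+1) + 6) * K (s'+2) (t'+1) :=
        iht (t'+1) (by omega) (by omega)
      have hG : F2 (s'+1) (d+1) ≤ (Useq (s'+1) * (d+1) + 6) * K (s'+1) (d+1) :=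
        ihs (s'+1) (by omega) (by omega) (d+1) (by omega)
      have hU := U_prop s'
      set Kv := K (s'+2) (t'+1) with hKv
      set m := K (s'+1) (d+1) with hm
      set Rv := R (s'+2) (t'+1) with hRv
      set P := (2:ℕ)^(s'+2) with hP
      have hKv1 : 1 ≤ Kv := by omega
      -- key inequality: (3 + U₁) * (d+1) + 4 * Kv + 7 ≤ U₂ * Kv
      have hkey : P * ((3 + Useq (s'+1)) * (d+1) + 4*Kv + 7) ≤ P * (Useq (s'+2) * Kv) := by
        have h1 : (3 + Useq (s'+1)) * (P * ((d+1) + 8)) ≤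
            (3 + Useq (s'+1)) * ((P + 11) * Kv) := Nat.mul_le_mul_left _ hL3
        have e48 : (2:ℕ)^(s'+4) = 4 * P := by rw [hP]; ring
        have h2 : ((Useq (s'+1) + 3) * (P + 11) + 4*P) * Kv ≤ (P * Useq (s'+2)) * Kv := by
          apply Nat.mul_le_mul_right
          rw [← e48]
          exact hU
        nlinarith [h1, h2, hKv1]
      have hkey' : (3 + Useq (s'+1)) * (d+1) + 4*Kv + 7 ≤ Useq (s'+2) * Kv :=
        Nat.le_of_mul_le_mul_left hkey (by positivity)
      show F2 (s'+2) (t'+2) ≤ (Useq (s'+2) * (t'+2) + 6) * K (s'+2) (t'+2)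
      rw [eq2, eqK]
      have hFm := Nat.mul_le_mul_left m hF
      have hkm := Nat.mul_le_mul_left m hkey'
      have hRm := Nat.mul_le_mul_left m hR
      linarith [hFm, hG, hkm, hRm]


/-- Proposition (face-asymptotics, second part): for all positive integers `s` and `t`
with `t > s`, `3s/2 < F_1(s,t)/(t*K(s,t)) < F_2(s,t)/(t*K(s,t)) < 158s`; in integer form,
`3 * s * t * K(s,t) < 2 * F_1(s,t)`, `F_1(s,t) < F_2(s,t)`, and
`F_2(s,t) < 158 * s * t * K(s,t)`. -/
theorem F1_F2_bounds (s t : ℕ) (hs : 0 < s) (hts : s < t) :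
    3 * s * (t * K s t) < 2 * F1 s t ∧ F1 s t < F2 s t ∧
      F2 s t < 158 * s * (t * K s t) := by
  have hs1 : 1 ≤ s := hs
  have ht1 : 1 ≤ t := by omega
  have hKb := base_KK s hs1 t ht1
  have hK1 : 1 ≤ K s t := by
    have : (1:ℕ) ≤ 2^s := Nat.one_le_two_pow
    omega
  refine ⟨?_, ?_, ?_⟩
  · obtain ⟨t', rfl⟩ : ∃ t', t = t' + 1 := ⟨t - 1, by omega⟩
    have hlow : ((3*s+3)*t' + 12) * K s (t'+1) ≤ 2 * F1 s (t'+1) :=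
      F1_lower s hs1 (t'+1) ht1
    have hst : s ≤ t' := by omega
    have hco : 3*s*(t'+1) + 12 ≤ (3*s+3)*t' + 12 := by nlinarith [hst]
    have h1 : (3*s*(t'+1) + 12) * K s (t'+1) ≤ ((3*s+3)*t' + 12) * K s (t'+1) :=
      Nat.mul_le_mul_right _ hco
    nlinarith [h1, hlow, hK1]
  · have := F1_add_K_le_F2 s hs1 t ht1
    omega
  · have hup := F2_upper s hs1 t ht1
    obtain ⟨s', rfl⟩ : ∃ s', s = s' + 1 := ⟨s - 1, by omega⟩
    have hU : Useq (s'+1) ≤ 100 * (s'+1) := U_le s'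
    have h2 : Useq (s'+1) * t + 6 ≤ 100*(s'+1)*t + 6 := by
      have := Nat.mul_le_mul_right t hU
      omega
    have h3 : (Useq (s'+1) * t + 6) * K (s'+1) t ≤ (100*(s'+1)*t + 6) * K (s'+1) t :=
      Nat.mul_le_mul_right _ h2
    have hX1 : 1 ≤ (s'+1) * t := Nat.one_le_iff_ne_zero.2 (by positivity)
    have h4 : 1 * K (s'+1) t ≤ ((s'+1)*t) * K (s'+1) t := Nat.mul_le_mul_right _ hX1
    nlinarith [hup, h3, h4, hK1]
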